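/- Let 0 < p < 1, 0 < β < 1, σ > 0, μ > 0, and let B, Z₀, Z₁ be independent random variables on a probability space with P(B = 1) = p = 1 − P(B = 0), Z₀ ~ N(0, μ), Z₁ ~ N(0, σ² + μ). Put Q = Z₁ if B = 1 and Q = Z₀ if B = 0, and let τ′ = 2 · ((σ² + μ)/(σ²/μ)) · ln( β(1 − p) · √(σ²/μ + 1) / ((1 − β)p) ). Assume τ′ ≥ 0. Then the false positive rate of the threshold detector equals P(Q² > τ′ | B = 0) = erfc(√(τ′/(2μ))), and the false negative rate equals P(Q² ≤ τ′ | B = 1) = erf(√(τ′/(2(σ² + μ)))). -/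

import Mathlib

open MeasureTheory ProbabilityTheory Real

/-- The Gauss error function `erf x = (2/√π) ∫₀ˣ e^{−t²} dt`. -/
noncomputable def erf (x : ℝ) : ℝ :=
  (2 / Real.sqrt Real.pi) * ∫ t in (0:ℝ)..x, Real.exp (-t ^ 2)

/-- The complementary error function `erfc = 1 − erf`. -/
noncomputable def erfc (x : ℝ) : ℝ := 1 - erf x

lemma erf_nonneg {x : ℝ} (hx : 0 ≤ x) : 0 ≤ erf x := by
  apply mul_nonneg
  · positivity
  · apply intervalIntegral.integral_nonneg hx
    intro t _; positivity

lemma gaussian_sq_le (v : NNReal) (hv : v ≠ 0) {s : ℝ} (hs : 0 ≤ s) :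
    gaussianReal 0 v {x : ℝ | x ^ 2 ≤ s} = ENNReal.ofReal (erf (Real.sqrt (s / (2 * v)))) := by
  have hv0 : (0:ℝ) < (v:ℝ) := by positivity
  have h2v : (0:ℝ) < Real.sqrt (2 * v) := Real.sqrt_pos.mpr (by positivity)
  set a := Real.sqrt s with ha
  have ha0 : 0 ≤ a := Real.sqrt_nonneg s
  have hset : {x : ℝ | x ^ 2 ≤ s} = Set.Icc (-a) a := by
    ext x
    simp only [Set.mem_setOf_eq, Set.mem_Icc]
    rw [← abs_le, ← Real.sqrt_sq_eq_abs, ha, Real.sqrt_le_sqrt_iff hs]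
  rw [hset, gaussianReal_apply_eq_integral _ hv]
  congr 1
  rw [MeasureTheory.integral_Icc_eq_integral_Ioc,
    ← intervalIntegral.integral_of_le (by linarith)]
  -- now compute ∫ x in -a..a, gaussianPDFReal 0 v x
  have hpdf : ∀ x : ℝ, gaussianPDFReal 0 v x
      = (Real.sqrt (2 * Real.pi * v))⁻¹ * Real.exp (-((Real.sqrt (2 * v))⁻¹ * x) ^ 2) := by
    intro x
    have h1 : ((Real.sqrt (2*v))⁻¹ * x) ^ 2 = x ^ 2 / (2*v) := by
      rw [mul_pow, inv_pow, Real.sq_sqrt (by positivity)]; ring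
    rw [gaussianPDFReal, h1, sub_zero, neg_div]
  simp_rw [hpdf]
  rw [intervalIntegral.integral_const_mul,
    intervalIntegral.integral_comp_mul_left (fun t => Real.exp (-t ^ 2)) (by positivity)]
  have key : ∫ t in ((Real.sqrt (2*v))⁻¹ * -a)..((Real.sqrt (2*v))⁻¹ * a), Real.exp (-t ^ 2)
      = 2 * ∫ t in (0:ℝ)..((Real.sqrt (2*v))⁻¹ * a), Real.exp (-t ^ 2) := by
    set b := (Real.sqrt (2*v))⁻¹ * a with hb
    have hsplit : ∫ t in (-b)..b, Real.exp (-t ^ 2)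
        = (∫ t in (-b)..(0:ℝ), Real.exp (-t ^ 2)) + ∫ t in (0:ℝ)..b, Real.exp (-t ^ 2) := by
      rw [intervalIntegral.integral_add_adjacent_intervals] <;>
        exact (Continuous.intervalIntegrable (by continuity) _ _)
    have hneg : ∫ t in (-b)..(0:ℝ), Real.exp (-t ^ 2)
        = ∫ t in (0:ℝ)..b, Real.exp (-t ^ 2) := by
      rw [show (0:ℝ) = -(0:ℝ) by ring, ← intervalIntegral.integral_comp_neg (fun t => Real.exp (-t ^ 2))]
      simp [neg_sq]
    rw [mul_comm ((Real.sqrt (2*v))⁻¹) (-a), neg_mul, mul_comm, ← hb, hsplit, hneg]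
    ring
  rw [key]
  have hsqrt : (Real.sqrt (2*v))⁻¹ * a = Real.sqrt (s / (2 * v)) := by
    rw [ha, Real.sqrt_div hs, div_eq_inv_mul]
  rw [hsqrt, erf]
  rw [smul_eq_mul]
  have hconst : (Real.sqrt (2 * Real.pi * v))⁻¹ * (((Real.sqrt (2*v))⁻¹)⁻¹ * _root_.id (2 * ∫ t in (0:ℝ)..(Real.sqrt (s / (2 * v))), Real.exp (-t ^ 2)))
      = 2 / Real.sqrt Real.pi * ∫ t in (0:ℝ)..(Real.sqrt (s / (2 * v))), Real.exp (-t ^ 2) := by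
    rw [inv_inv, _root_.id]
    have : Real.sqrt (2 * Real.pi * v) = Real.sqrt Real.pi * Real.sqrt (2 * v) := by
      rw [← Real.sqrt_mul Real.pi_pos.le]; ring_nf
    rw [this, mul_inv]
    field_simp
  convert hconst using 2 <;> simp

lemma erf_le_one {x : ℝ} (hx : 0 ≤ x) : erf x ≤ 1 := by
  have hint : ∫ t in Set.Ioi (0:ℝ), Real.exp (-t ^ 2) = Real.sqrt Real.pi / 2 := by
    have := integral_gaussian_Ioi 1
    simpa [div_one] using this
  have hle : ∫ t in (0:ℝ)..x, Real.exp (-t ^ 2) ≤ Real.sqrt Real.pi / 2 := by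
    rw [intervalIntegral.integral_of_le hx, ← hint]
    apply MeasureTheory.setIntegral_mono_set
    · have : Integrable (fun t : ℝ => Real.exp (-1 * t ^ 2)) := integrable_exp_neg_mul_sq one_pos
      simpa using this.integrableOn
    · filter_upwards with t using le_of_lt (Real.exp_pos _)
    · exact Filter.Eventually.of_forall Set.Ioc_subset_Ioi_self
  rw [erf]
  have hpi : (0:ℝ) < Real.sqrt Real.pi := Real.sqrt_pos.mpr Real.pi_pos
  calc 2 / Real.sqrt Real.pi * ∫ t in (0:ℝ)..x, Real.exp (-t ^ 2)
      ≤ 2 / Real.sqrt Real.pi * (Real.sqrt Real.pi / 2) := by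
        apply mul_le_mul_of_nonneg_left hle (by positivity)
    _ = 1 := by field_simp

lemma gaussian_sq_gt (v : NNReal) (hv : v ≠ 0) {s : ℝ} (hs : 0 ≤ s) :
    gaussianReal 0 v {x : ℝ | s < x ^ 2} = ENNReal.ofReal (erfc (Real.sqrt (s / (2 * v)))) := by
  have hs' : {x : ℝ | s < x ^ 2} = {x : ℝ | x ^ 2 ≤ s}ᶜ := by
    ext x; simp [not_le]
  have hmeas : MeasurableSet {x : ℝ | x ^ 2 ≤ s} :=
    measurableSet_le (by measurability) measurable_const
  rw [hs', measure_compl hmeas (measure_ne_top _ _), gaussian_sq_le v hv hs]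
  rw [erfc, ENNReal.ofReal_sub _ (erf_nonneg (Real.sqrt_nonneg _)), ENNReal.ofReal_one]
  simp

/-- **Corollary 3, part 2 (ROC rates).**  In the sparse Gaussian mixture model with
threshold `τ′ ≥ 0`, the false positive rate equals `P(Q² > τ′ | B = 0) = erfc(√(τ′/(2μ)))`
and the false negative rate equals `P(Q² ≤ τ′ | B = 1) = erf(√(τ′/(2(σ² + μ))))`. -/
theorem mmwse_false_positive_false_negative_rates
    {Ω : Type*} [MeasurableSpace Ω] (P : Measure Ω) [IsProbabilityMeasure P]
    (p β : ℝ) (hp : 0 < p) (hp1 : p < 1) (hβ : 0 < β) (hβ1 : β < 1)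
    (σ μ : NNReal) (hσ : 0 < σ) (hμ : 0 < μ)
    (B Z₀ Z₁ : Ω → ℝ) (hB : Measurable B) (hZ₀ : Measurable Z₀) (hZ₁ : Measurable Z₁)
    (hindep : iIndepFun ![B, Z₀, Z₁] P)
    (hB1 : P {ω | B ω = 1} = ENNReal.ofReal p)
    (hB0 : P {ω | B ω = 0} = ENNReal.ofReal (1 - p))
    (hZ₀law : Measure.map Z₀ P = gaussianReal 0 μ)
    (hZ₁law : Measure.map Z₁ P = gaussianReal 0 (σ ^ 2 + μ))
    (Q : Ω → ℝ) (hQ : Q = fun ω => if B ω = 1 then Z₁ ω else Z₀ ω)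
    (τ' : ℝ)
    (hτ' : τ' = 2 * (((σ:ℝ) ^ 2 + μ) / ((σ:ℝ) ^ 2 / μ))
        * Real.log (β * (1 - p) * Real.sqrt ((σ:ℝ) ^ 2 / μ + 1) / ((1 - β) * p)))
    (hτ'0 : 0 ≤ τ') :
    P ({ω | τ' < Q ω ^ 2} ∩ {ω | B ω = 0}) / P {ω | B ω = 0}
        = ENNReal.ofReal (erfc (Real.sqrt (τ' / (2 * μ))))
      ∧ P ({ω | Q ω ^ 2 ≤ τ'} ∩ {ω | B ω = 1}) / P {ω | B ω = 1}
        = ENNReal.ofReal (erf (Real.sqrt (τ' / (2 * ((σ:ℝ) ^ 2 + μ))))) := by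
  -- independence of the pairs
  have hind0 : IndepFun Z₀ B P := by
    have := hindep.indepFun (i := 1) (j := 0) (by decide)
    simpa using this
  have hind1 : IndepFun Z₁ B P := by
    have := hindep.indepFun (i := 2) (j := 0) (by decide)
    simpa using this
  -- measurable target sets
  have hmA : MeasurableSet {x : ℝ | τ' < x ^ 2} :=
    measurableSet_lt measurable_const (by measurability)
  have hmA' : MeasurableSet {x : ℝ | x ^ 2 ≤ τ'} :=
    measurableSet_le (by measurability) measurable_const
  have hm0 : MeasurableSet ({0} : Set ℝ) := measurableSet_singleton 0
  have hm1 : MeasurableSet ({1} : Set ℝ) := measurableSet_singleton 1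
  -- set rewrites
  have hset0 : {ω | τ' < Q ω ^ 2} ∩ {ω | B ω = 0}
      = Z₀ ⁻¹' {x : ℝ | τ' < x ^ 2} ∩ B ⁻¹' {0} := by
    ext ω
    simp only [hQ, Set.mem_inter_iff, Set.mem_setOf_eq, Set.mem_preimage, Set.mem_singleton_iff]
    constructor
    · rintro ⟨h1, h2⟩
      rw [if_neg (by rw [h2]; norm_num)] at h1
      exact ⟨h1, h2⟩
    · rintro ⟨h1, h2⟩
      exact ⟨by rw [if_neg (by rw [h2]; norm_num)]; exact h1, h2⟩
  have hset1 : {ω | Q ω ^ 2 ≤ τ'} ∩ {ω | B ω = 1}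
      = Z₁ ⁻¹' {x : ℝ | x ^ 2 ≤ τ'} ∩ B ⁻¹' {1} := by
    ext ω
    simp only [hQ, Set.mem_inter_iff, Set.mem_setOf_eq, Set.mem_preimage, Set.mem_singleton_iff]
    constructor
    · rintro ⟨h1, h2⟩
      rw [if_pos h2] at h1
      exact ⟨h1, h2⟩
    · rintro ⟨h1, h2⟩
      exact ⟨by rw [if_pos h2]; exact h1, h2⟩
  have hpre0 : B ⁻¹' {0} = {ω | B ω = 0} := rfl
  have hpre1 : B ⁻¹' {1} = {ω | B ω = 1} := rfl
  -- nonzero denominators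
  have hd0 : P {ω | B ω = 0} ≠ 0 := by
    rw [hB0]; simp only [ne_eq, ENNReal.ofReal_eq_zero, not_le]; linarith
  have hd1 : P {ω | B ω = 1} ≠ 0 := by
    rw [hB1]; simp only [ne_eq, ENNReal.ofReal_eq_zero, not_le]; linarith
  constructor
  · rw [hset0, hind0.measure_inter_preimage_eq_mul _ _ hmA hm0, hpre0,
      mul_div_assoc, ENNReal.div_self hd0 (measure_ne_top _ _), mul_one,
      ← Measure.map_apply hZ₀ hmA, hZ₀law]
    exact gaussian_sq_gt μ hμ.ne' hτ'0
  · rw [hset1, hind1.measure_inter_preimage_eq_mul _ _ hmA' hm1, hpre1,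
      mul_div_assoc, ENNReal.div_self hd1 (measure_ne_top _ _), mul_one,
      ← Measure.map_apply hZ₁ hmA', hZ₁law]
    have := gaussian_sq_le (σ ^ 2 + μ) (by positivity) hτ'0
    rw [this]
    norm_cast
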